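/- Let f:(A,α)→(C,γ) and g:(B,β)→(D,δ) be continuous surjections between digital images. Then f and g are both shy if and only if the product map f × g : (A×B, k*(α,β)) → (C×D, k*(γ,δ)) is shy. -/

import Mathlib

/-- A subset `A` is connected under adjacency `κ` if any two of its points are
joined by a path within `A` whose consecutive points are `κ`-adjacent. -/
def DConn {X : Type*} (κ : X → X → Prop) (A : Set X) : Prop :=
  ∀ a ∈ A, ∀ b ∈ A,
    Relation.ReflTransGen (fun u v => κ u v ∧ u ∈ A ∧ v ∈ A) a b

/-- `f` is digitally continuous if images of connected sets are connected. -/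
def DCont {X Y : Type*} (κ : X → X → Prop) (lam : Y → Y → Prop) (f : X → Y) : Prop :=
  ∀ A : Set X, DConn κ A → DConn lam (f '' A)

/-- `f` is shy: a continuous surjection with connected point preimages and
connected preimages of adjacent pairs. -/
def DShy {X Y : Type*} (κ : X → X → Prop) (lam : Y → Y → Prop) (f : X → Y) : Prop :=
  DCont κ lam f ∧ Function.Surjective f ∧
    (∀ y : Y, DConn κ (f ⁻¹' {y})) ∧
    ∀ y₀ y₁ : Y, lam y₀ y₁ → DConn κ (f ⁻¹' {y₀, y₁})

/-- Normal product adjacency. -/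
def NP {X Y : Type*} (κ : X → X → Prop) (lam : Y → Y → Prop) :
    X × Y → X × Y → Prop :=
  fun p q => p ≠ q ∧ (p.1 = q.1 ∨ κ p.1 q.1) ∧ (p.2 = q.2 ∨ lam p.2 q.2)

open Relation

section Helpers

variable {X Y : Type*}

lemma rtg_symm {r : X → X → Prop} (hs : ∀ a b, r a b → r b a) {a b : X}
    (h : ReflTransGen r a b) : ReflTransGen r b a := by
  induction h with
  | refl => exact .refl
  | tail h₁ h₂ ih => exact (ReflTransGen.single (hs _ _ h₂)).trans ih

lemma path_mono {κ : X → X → Prop} {A S : Set X} (hAS : A ⊆ S) {a b : X}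
    (h : ReflTransGen (fun u v => κ u v ∧ u ∈ A ∧ v ∈ A) a b) :
    ReflTransGen (fun u v => κ u v ∧ u ∈ S ∧ v ∈ S) a b :=
  ReflTransGen.mono (fun u v hh => ⟨hh.1, hAS hh.2.1, hAS hh.2.2⟩) _ _ h

lemma dconn_pair {κ : X → X → Prop} (hs : Symmetric κ) {x y : X} (h : κ x y) :
    DConn κ ({x, y} : Set X) := by
  intro a ha b hb
  have hx : x ∈ ({x, y} : Set X) := by simp
  have hy : y ∈ ({x, y} : Set X) := by simp
  simp only [Set.mem_insert_iff, Set.mem_singleton_iff] at ha hb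
  rcases ha with rfl | rfl <;> rcases hb with rfl | rfl
  · exact .refl
  · exact ReflTransGen.single ⟨h, hx, hy⟩
  · exact ReflTransGen.single ⟨hs h, hy, hx⟩
  · exact .refl

lemma dcont_of_pointwise {κ : X → X → Prop} {lam : Y → Y → Prop} {f : X → Y}
    (h : ∀ x y, κ x y → f x = f y ∨ lam (f x) (f y)) : DCont κ lam f := by
  intro A hA
  rintro _ ⟨a, ha, rfl⟩ _ ⟨b, hb, rfl⟩
  have hp := hA a ha b hb
  induction hp with
  | refl => exact .refl
  | tail h₁ h₂ ih =>
      have ih' := ih h₂.2.1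
      rcases h _ _ h₂.1 with he | hl
      · exact he ▸ ih'
      · exact ih'.tail ⟨hl, ⟨_, h₂.2.1, rfl⟩, ⟨_, h₂.2.2, rfl⟩⟩

lemma pointwise_of_dcont {κ : X → X → Prop} {lam : Y → Y → Prop}
    (hκs : Symmetric κ) (hli : Irreflexive lam) {f : X → Y}
    (h : DCont κ lam f) : ∀ x y, κ x y → f x = f y ∨ lam (f x) (f y) := by
  intro x y hxy
  by_cases he : f x = f y
  · exact Or.inl he
  have hconn := h _ (dconn_pair hκs hxy)
  have hpath := hconn (f x) ⟨x, by simp, rfl⟩ (f y) ⟨y, by simp, rfl⟩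
  rcases hpath.cases_head with he' | ⟨z, hz, _⟩
  · exact absurd he' he
  rcases hz with ⟨hl, _, w, hw, rfl⟩
  simp only [Set.mem_insert_iff, Set.mem_singleton_iff] at hw
  rcases hw with rfl | rfl
  · exact absurd hl (hli _)
  · exact Or.inr hl

lemma np_symm {α : X → X → Prop} {β : Y → Y → Prop}
    (hαs : Symmetric α) (hβs : Symmetric β) : Symmetric (NP α β) := by
  rintro p q ⟨hne, h1, h2⟩
  exact ⟨hne.symm, h1.imp Eq.symm (fun h => hαs h), h2.imp Eq.symm (fun h => hβs h)⟩

lemma dconn_prod {α : X → X → Prop} {β : Y → Y → Prop}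
    (hαi : Irreflexive α) (hβi : Irreflexive β)
    {S : Set X} {T : Set Y} (hS : DConn α S) (hT : DConn β T) :
    DConn (NP α β) (S ×ˢ T) := by
  rintro ⟨a, b⟩ ⟨ha, hb⟩ ⟨a', b'⟩ ⟨ha', hb'⟩
  have leg1 : ReflTransGen
      (fun p q => NP α β p q ∧ p ∈ S ×ˢ T ∧ q ∈ S ×ˢ T) (a, b) (a', b) := by
    refine ReflTransGen.lift (fun u => (u, b)) ?_ _ _ (hS a ha a' ha')
    rintro u v ⟨huv, hu, hv⟩
    refine ⟨⟨?_, Or.inr huv, Or.inl rfl⟩, ⟨hu, hb⟩, ⟨hv, hb⟩⟩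
    intro hEq
    have : u = v := congrArg Prod.fst hEq
    exact hαi v (this ▸ huv)
  have leg2 : ReflTransGen
      (fun p q => NP α β p q ∧ p ∈ S ×ˢ T ∧ q ∈ S ×ˢ T) (a', b) (a', b') := by
    refine ReflTransGen.lift (fun u => (a', u)) ?_ _ _ (hT b hb b' hb')
    rintro u v ⟨huv, hu, hv⟩
    refine ⟨⟨?_, Or.inl rfl, Or.inr huv⟩, ⟨ha', hu⟩, ⟨ha', hv⟩⟩
    intro hEq
    have : u = v := congrArg Prod.snd hEq
    exact hβi v (this ▸ huv)
  exact leg1.trans leg2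

lemma exists_crossing {r : X → X → Prop} {P Q : Set X}
    (hdisj : ∀ x, x ∈ P → x ∈ Q → False) {a b : X} (ha : a ∈ P) (hb : b ∈ Q)
    (h : ReflTransGen (fun u v => r u v ∧ u ∈ P ∪ Q ∧ v ∈ P ∪ Q) a b) :
    ∃ u v, r u v ∧ u ∈ P ∧ v ∈ Q := by
  have key : ∀ {x}, ReflTransGen (fun u v => r u v ∧ u ∈ P ∪ Q ∧ v ∈ P ∪ Q) x b →
      x ∈ P → ∃ u v, r u v ∧ u ∈ P ∧ v ∈ Q := by
    intro x hx
    induction hx using Relation.ReflTransGen.head_induction_on with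
    | refl => exact fun hxP => (hdisj _ hxP hb).elim
    | head h' h'' ih =>
        intro hxP
        rcases h' with ⟨hr, _, hcv⟩
        rcases hcv with hcP | hcQ
        · exact ih hcP
        · exact ⟨_, _, hr, hxP, hcQ⟩
  exact key h ha

lemma dconn_union {κ : X → X → Prop} (hs : Symmetric κ) {P Q : Set X}
    (hP : DConn κ P) (hQ : DConn κ Q) {u v : X} (hu : u ∈ P) (hv : v ∈ Q)
    (huv : κ u v) : DConn κ (P ∪ Q) := by
  have reach : ∀ x ∈ P ∪ Q,
      ReflTransGen (fun a b => κ a b ∧ a ∈ P ∪ Q ∧ b ∈ P ∪ Q) u x := by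
    intro x hx
    rcases hx with hxP | hxQ
    · exact path_mono Set.subset_union_left (hP u hu x hxP)
    · exact (ReflTransGen.single ⟨huv, Or.inl hu, Or.inr hv⟩).trans
        (path_mono Set.subset_union_right (hQ v hv x hxQ))
  intro a ha b hb
  have hsym : ∀ p q, (κ p q ∧ p ∈ P ∪ Q ∧ q ∈ P ∪ Q) →
      (κ q p ∧ q ∈ P ∪ Q ∧ p ∈ P ∪ Q) := fun p q hh => ⟨hs hh.1, hh.2.2, hh.2.1⟩
  exact (rtg_symm hsym (reach a ha)).trans (reach b hb)

end Helpers

theorem product_map_shy_iff {A B C D : Type*}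
    [Nonempty A] [Nonempty B] [Nonempty C] [Nonempty D]
    (α : A → A → Prop) (β : B → B → Prop) (γ : C → C → Prop) (δ : D → D → Prop)
    (hαs : Symmetric α) (hαi : Irreflexive α)
    (hβs : Symmetric β) (hβi : Irreflexive β)
    (hγs : Symmetric γ) (hγi : Irreflexive γ)
    (hδs : Symmetric δ) (hδi : Irreflexive δ)
    (f : A → C) (g : B → D)
    (hf : DCont α γ f) (hfs : Function.Surjective f)
    (hg : DCont β δ g) (hgs : Function.Surjective g) :
    (DShy α γ f ∧ DShy β δ g) ↔
      DShy (NP α β) (NP γ δ) (Prod.map f g) := by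
  have hfc := pointwise_of_dcont hαs hγi hf
  have hgc := pointwise_of_dcont hβs hδi hg
  constructor
  · rintro ⟨⟨_, _, hFf, hPf⟩, ⟨_, _, hFg, hPg⟩⟩
    refine ⟨dcont_of_pointwise ?_, ?_, ?_, ?_⟩
    · -- continuity of product map
      rintro ⟨a, b⟩ ⟨a', b'⟩ ⟨hne, h1, h2⟩
      have hC : f a = f a' ∨ γ (f a) (f a') := by
        rcases h1 with h | h
        · exact Or.inl (congrArg f h)
        · exact hfc _ _ h
      have hD : g b = g b' ∨ δ (g b) (g b') := by
        rcases h2 with h | h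
        · exact Or.inl (congrArg g h)
        · exact hgc _ _ h
      simp only [Prod.map_apply]
      rcases hC with hC | hC <;> rcases hD with hD | hD
      · exact Or.inl (by rw [hC, hD])
      · refine Or.inr ⟨?_, Or.inl hC, Or.inr hD⟩
        intro hEq
        have hh : g b = g b' := congrArg Prod.snd hEq
        exact hδi _ (hh ▸ hD)
      · refine Or.inr ⟨?_, Or.inr hC, Or.inl hD⟩
        intro hEq
        have hh : f a = f a' := congrArg Prod.fst hEq
        exact hγi _ (hh ▸ hC)
      · refine Or.inr ⟨?_, Or.inr hC, Or.inr hD⟩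
        intro hEq
        have hh : f a = f a' := congrArg Prod.fst hEq
        exact hγi _ (hh ▸ hC)
    · -- surjectivity
      rintro ⟨c, d⟩
      obtain ⟨a, rfl⟩ := hfs c
      obtain ⟨b, rfl⟩ := hgs d
      exact ⟨(a, b), rfl⟩
    · -- fibers
      rintro ⟨c, d⟩
      have hset : (Prod.map f g) ⁻¹' {(c, d)} = (f ⁻¹' {c}) ×ˢ (g ⁻¹' {d}) := by
        ext ⟨a, b⟩
        simp [Prod.ext_iff]
      rw [hset]
      exact dconn_prod hαi hβi (hFf c) (hFg d)
    · -- adjacent pairs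
      rintro ⟨c₀, d₀⟩ ⟨c₁, d₁⟩ ⟨hne, hc, hd⟩
      rcases hc with hc | hc
      · -- first coordinates equal
        rcases hd with hd | hd
        · exact absurd (Prod.ext hc hd) hne
        subst hc
        have hset : (Prod.map f g) ⁻¹' {(c₀, d₀), (c₀, d₁)}
            = (f ⁻¹' {c₀}) ×ˢ (g ⁻¹' {d₀, d₁}) := by
          ext ⟨a, b⟩
          simp [Prod.ext_iff]
          tauto
        rw [hset]
        exact dconn_prod hαi hβi (hFf c₀) (hPg d₀ d₁ hd)
      rcases hd with hd | hd
      · -- second coordinates equal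
        subst hd
        have hset : (Prod.map f g) ⁻¹' {(c₀, d₀), (c₁, d₀)}
            = (f ⁻¹' {c₀, c₁}) ×ˢ (g ⁻¹' {d₀}) := by
          ext ⟨a, b⟩
          simp [Prod.ext_iff]
          tauto
        rw [hset]
        exact dconn_prod hαi hβi (hPf c₀ c₁ hc) (hFg d₀)
      · -- both coordinates adjacent
        have hnec : c₀ ≠ c₁ := fun h => hγi _ (h ▸ hc)
        have hned : d₀ ≠ d₁ := fun h => hδi _ (h ▸ hd)
        -- crossing in A
        obtain ⟨a₀, ha₀⟩ := hfs c₀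
        obtain ⟨a₁, ha₁⟩ := hfs c₁
        have hsetA : f ⁻¹' {c₀, c₁} = f ⁻¹' {c₀} ∪ f ⁻¹' {c₁} := by
          ext x; simp
        have hconnA := hPf c₀ c₁ hc
        rw [hsetA] at hconnA
        obtain ⟨u, v, huv, hu, hv⟩ :=
          exists_crossing (P := f ⁻¹' {c₀}) (Q := f ⁻¹' {c₁})
            (fun x hx0 hx1 => hnec ((Set.mem_singleton_iff.mp hx0).symm.trans
              (Set.mem_singleton_iff.mp hx1)))
            (show a₀ ∈ f ⁻¹' {c₀} from ha₀) (show a₁ ∈ f ⁻¹' {c₁} from ha₁)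
            (hconnA a₀ (Or.inl ha₀) a₁ (Or.inr ha₁))
        -- crossing in B
        obtain ⟨b₀, hb₀⟩ := hgs d₀
        obtain ⟨b₁, hb₁⟩ := hgs d₁
        have hsetB : g ⁻¹' {d₀, d₁} = g ⁻¹' {d₀} ∪ g ⁻¹' {d₁} := by
          ext x; simp
        have hconnB := hPg d₀ d₁ hd
        rw [hsetB] at hconnB
        obtain ⟨u', v', huv', hu', hv'⟩ :=
          exists_crossing (P := g ⁻¹' {d₀}) (Q := g ⁻¹' {d₁})
            (fun x hx0 hx1 => hned ((Set.mem_singleton_iff.mp hx0).symm.trans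
              (Set.mem_singleton_iff.mp hx1)))
            (show b₀ ∈ g ⁻¹' {d₀} from hb₀) (show b₁ ∈ g ⁻¹' {d₁} from hb₁)
            (hconnB b₀ (Or.inl hb₀) b₁ (Or.inr hb₁))
        have hset : (Prod.map f g) ⁻¹' {(c₀, d₀), (c₁, d₁)}
            = ((f ⁻¹' {c₀}) ×ˢ (g ⁻¹' {d₀})) ∪ ((f ⁻¹' {c₁}) ×ˢ (g ⁻¹' {d₁})) := by
          ext ⟨a, b⟩
          simp [Prod.ext_iff]
        rw [hset]
        refine dconn_union (np_symm hαs hβs)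
          (dconn_prod hαi hβi (hFf c₀) (hFg d₀))
          (dconn_prod hαi hβi (hFf c₁) (hFg d₁))
          (u := (u, u')) (v := (v, v')) ⟨hu, hu'⟩ ⟨hv, hv'⟩ ?_
        refine ⟨?_, Or.inr huv, Or.inr huv'⟩
        intro hEq
        have : u = v := congrArg Prod.fst hEq
        exact hnec ((Set.mem_singleton_iff.mp hu).symm.trans
          (this ▸ Set.mem_singleton_iff.mp hv))
  · rintro ⟨hcont, hsurj, hFib, hPair⟩
    obtain ⟨b₀⟩ := (inferInstance : Nonempty B)
    obtain ⟨a₀⟩ := (inferInstance : Nonempty A)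
    have hfst : DCont (NP α β) α (Prod.fst : A × B → A) :=
      dcont_of_pointwise (fun p q h => h.2.1)
    have hsnd : DCont (NP α β) β (Prod.snd : A × B → B) :=
      dcont_of_pointwise (fun p q h => h.2.2)
    constructor
    · refine ⟨hf, hfs, ?_, ?_⟩
      · intro c
        have h1 := hfst _ (hFib (c, g b₀))
        have himg : Prod.fst '' ((Prod.map f g) ⁻¹' {(c, g b₀)}) = f ⁻¹' {c} := by
          ext a
          constructor
          · rintro ⟨⟨a', b⟩, hmem, rfl⟩
            simp only [Set.mem_preimage, Prod.map_apply, Set.mem_singleton_iff,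
              Prod.ext_iff] at hmem
            exact hmem.1
          · intro ha
            exact ⟨(a, b₀), by simp_all, rfl⟩
        rwa [himg] at h1
      · intro c₀ c₁ hc
        have hnec : c₀ ≠ c₁ := fun h => hγi _ (h ▸ hc)
        have hpair := hPair (c₀, g b₀) (c₁, g b₀)
          ⟨fun h => hnec (congrArg Prod.fst h), Or.inr hc, Or.inl rfl⟩
        have h1 := hfst _ hpair
        have himg : Prod.fst '' ((Prod.map f g) ⁻¹' {(c₀, g b₀), (c₁, g b₀)})
            = f ⁻¹' {c₀, c₁} := by
          ext a
          constructor
          · rintro ⟨⟨a', b⟩, hmem, rfl⟩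
            simp only [Set.mem_preimage, Set.mem_insert_iff, Prod.map_apply,
              Set.mem_singleton_iff, Prod.ext_iff] at hmem ⊢
            exact hmem.imp And.left And.left
          · intro ha
            refine ⟨(a, b₀), ?_, rfl⟩
            simp only [Set.mem_preimage, Set.mem_insert_iff,
              Set.mem_singleton_iff] at ha
            simp only [Set.mem_preimage, Set.mem_insert_iff, Prod.map_apply,
              Set.mem_singleton_iff, Prod.ext_iff]
            tauto
        rwa [himg] at h1
    · refine ⟨hg, hgs, ?_, ?_⟩
      · intro d
        have h1 := hsnd _ (hFib (f a₀, d))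
        have himg : Prod.snd '' ((Prod.map f g) ⁻¹' {(f a₀, d)}) = g ⁻¹' {d} := by
          ext b
          constructor
          · rintro ⟨⟨a, b'⟩, hmem, rfl⟩
            simp only [Set.mem_preimage, Prod.map_apply, Set.mem_singleton_iff,
              Prod.ext_iff] at hmem
            exact hmem.2
          · intro hb
            exact ⟨(a₀, b), by simp_all, rfl⟩
        rwa [himg] at h1
      · intro d₀ d₁ hd
        have hned : d₀ ≠ d₁ := fun h => hδi _ (h ▸ hd)
        have hpair := hPair (f a₀, d₀) (f a₀, d₁)
          ⟨fun h => hned (congrArg Prod.snd h), Or.inl rfl, Or.inr hd⟩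
        have h1 := hsnd _ hpair
        have himg : Prod.snd '' ((Prod.map f g) ⁻¹' {(f a₀, d₀), (f a₀, d₁)})
            = g ⁻¹' {d₀, d₁} := by
          ext b
          constructor
          · rintro ⟨⟨a, b'⟩, hmem, rfl⟩
            simp only [Set.mem_preimage, Set.mem_insert_iff, Prod.map_apply,
              Set.mem_singleton_iff, Prod.ext_iff] at hmem ⊢
            exact hmem.imp And.right And.right
          · intro hb
            refine ⟨(a₀, b), ?_, rfl⟩
            simp only [Set.mem_preimage, Set.mem_insert_iff,
              Set.mem_singleton_iff] at hb
            simp only [Set.mem_preimage, Set.mem_insert_iff, Prod.map_apply,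
              Set.mem_singleton_iff, Prod.ext_iff]
            tauto
        rwa [himg] at h1
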